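/- For all nonnegative integers i, j and every z ∈ ℂ, the mixed Wirtinger derivative of the Gaussian satisfies ∂^i ∂̄^j e^{-|z|²} = (Σ_{n=0}^{i} (-1)^{n+j} C(i,n) (j!/(j−i+n)!) z^{j−i+n} z̄^n) e^{-|z|²}, where terms with j < i − n are omitted (interpreted as zero). -/

import Mathlib

open MeasureTheory Complex Finset

noncomputable section

/-- Wirtinger derivative ∂ = (1/2)(∂/∂x − i ∂/∂y). -/
def dz (f : ℂ → ℂ) : ℂ → ℂ := fun z =>
  (1/2 : ℂ) * (fderiv ℝ f z 1 - Complex.I * fderiv ℝ f z Complex.I)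

/-- Wirtinger derivative ∂̄ = (1/2)(∂/∂x + i ∂/∂y). -/
def dzbar (f : ℂ → ℂ) : ℂ → ℂ := fun z =>
  (1/2 : ℂ) * (fderiv ℝ f z 1 + Complex.I * fderiv ℝ f z Complex.I)

/-- Weighted inner product ⟨f,g⟩_φ = ∫ conj f · g · e^{-φ}. -/
def wip (φ : ℂ → ℝ) (f g : ℂ → ℂ) : ℂ :=
  ∫ z : ℂ, (starRingEnd ℂ) (f z) * g z * (Real.exp (-(φ z)) : ℂ)

/-- Weighted squared L² norm ‖f‖²_φ. -/
def wnorm (φ : ℂ → ℝ) (f : ℂ → ℂ) : ℝ :=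
  ∫ z : ℂ, ‖f z‖ ^ 2 * Real.exp (-(φ z))

/-- Formal adjoint of ∂̄^k : ψ ↦ (−1)^k e^{φ} ∂^k(ψ e^{-φ}). -/
def dbarStar (k : ℕ) (φ : ℂ → ℝ) (ψ : ℂ → ℂ) : ℂ → ℂ := fun z =>
  (-1 : ℂ) ^ k * (Real.exp (φ z) : ℂ) *
    dz^[k] (fun w => ψ w * (Real.exp (-(φ w)) : ℂ)) z

/-- Formal adjoint of ∂^k : ψ ↦ (−1)^k e^{φ} ∂̄^k(ψ e^{-φ}). -/
def dStar (k : ℕ) (φ : ℂ → ℝ) (ψ : ℂ → ℂ) : ℂ → ℂ := fun z =>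
  (-1 : ℂ) ^ k * (Real.exp (φ z) : ℂ) *
    dzbar^[k] (fun w => ψ w * (Real.exp (-(φ w)) : ℂ)) z

/-- R = ∂^k ∂̄^k. -/
def Rop (k : ℕ) (ψ : ℂ → ℂ) : ℂ → ℂ := dz^[k] (dzbar^[k] ψ)

/-- Formal adjoint of R : ψ ↦ e^{φ} ∂^k ∂̄^k(ψ e^{-φ}). -/
def RStar (k : ℕ) (φ : ℂ → ℝ) (ψ : ℂ → ℂ) : ℂ → ℂ := fun z =>
  (Real.exp (φ z) : ℂ) *
    dz^[k] (dzbar^[k] (fun w => ψ w * (Real.exp (-(φ w)) : ℂ))) z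


private def G (a b : ℕ) : ℂ → ℂ := fun w =>
  w ^ a * (starRingEnd ℂ w) ^ b * Complex.exp (-(w * starRingEnd ℂ w))

private lemma hasFDerivAt_G (a b : ℕ) (z : ℂ) :
    ∃ D : ℂ →L[ℝ] ℂ, HasFDerivAt (G a b) D z ∧
      ∀ v, D v = ((((a:ℂ) * z^(a-1) * (starRingEnd ℂ z)^b - z^a * (starRingEnd ℂ z)^(b+1)) * v
        + ((b:ℂ) * z^a * (starRingEnd ℂ z)^(b-1) - z^(a+1) * (starRingEnd ℂ z)^b) * starRingEnd ℂ v)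
        * Complex.exp (-(z * starRingEnd ℂ z))) := by
  have hpow : HasFDerivAt (fun w : ℂ => w ^ a)
      (((ContinuousLinearMap.smulRight (1 : ℂ →L[ℂ] ℂ) ((a:ℂ) * z ^ (a-1)))).restrictScalars ℝ) z :=
    ((hasDerivAt_pow a z).hasFDerivAt).restrictScalars ℝ
  have hconj : HasFDerivAt (fun w : ℂ => (starRingEnd ℂ) w)
      (Complex.conjCLE.toContinuousLinearMap) z := Complex.conjCLE.toContinuousLinearMap.hasFDerivAt
  have hconjpow : HasFDerivAt (fun w : ℂ => (starRingEnd ℂ w) ^ b)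
      (((((ContinuousLinearMap.smulRight (1 : ℂ →L[ℂ] ℂ)
        ((b:ℂ) * (starRingEnd ℂ z) ^ (b-1)))).restrictScalars ℝ).comp
        Complex.conjCLE.toContinuousLinearMap)) z :=
    (((hasDerivAt_pow b (starRingEnd ℂ z)).hasFDerivAt).restrictScalars ℝ).comp z hconj
  have hid : HasFDerivAt (fun w : ℂ => w) (ContinuousLinearMap.id ℝ ℂ) z := hasFDerivAt_id z
  have hinner := (hid.mul hconj).neg
  have hexp := (((Complex.hasDerivAt_exp (-(z * starRingEnd ℂ z))).hasFDerivAt).restrictScalars ℝ).comp z hinner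
  have htot := (hpow.mul hconjpow).mul hexp
  refine ⟨_, htot, fun v => ?_⟩
  simp [ContinuousLinearMap.smulRight_apply, Complex.conjCLE_apply, smul_eq_mul]
  ring

private lemma dz_eval {f : ℂ → ℂ} {D : ℂ →L[ℝ] ℂ} {z : ℂ} (h : HasFDerivAt f D z) :
    dz f z = (1/2 : ℂ) * (D 1 - Complex.I * D Complex.I) := by
  simp [dz, h.fderiv]

private lemma dzbar_eval {f : ℂ → ℂ} {D : ℂ →L[ℝ] ℂ} {z : ℂ} (h : HasFDerivAt f D z) :
    dzbar f z = (1/2 : ℂ) * (D 1 + Complex.I * D Complex.I) := by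
  simp [dzbar, h.fderiv]

private lemma dz_G (a b : ℕ) (z : ℂ) :
    dz (G a b) z = ((a:ℂ) * z^(a-1) * (starRingEnd ℂ z)^b - z^a * (starRingEnd ℂ z)^(b+1))
      * Complex.exp (-(z * starRingEnd ℂ z)) := by
  obtain ⟨D, hD, hv⟩ := hasFDerivAt_G a b z
  rw [dz_eval hD, hv, hv]
  simp [Complex.conj_I]
  ring_nf
  rw [Complex.I_sq]
  ring

private lemma dzbar_G (a b : ℕ) (z : ℂ) :
    dzbar (G a b) z = ((b:ℂ) * z^a * (starRingEnd ℂ z)^(b-1) - z^(a+1) * (starRingEnd ℂ z)^b)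
      * Complex.exp (-(z * starRingEnd ℂ z)) := by
  obtain ⟨D, hD, hv⟩ := hasFDerivAt_G a b z
  rw [dzbar_eval hD, hv, hv]
  simp [Complex.conj_I]
  ring_nf
  rw [Complex.I_sq]
  ring

private lemma dz_sum_cG (s : Finset ℕ) (c : ℕ → ℂ) (p q : ℕ → ℕ) (z : ℂ) :
    dz (fun w => ∑ n ∈ s, c n * G (p n) (q n) w) z = ∑ n ∈ s, c n * dz (G (p n) (q n)) z := by
  have h := fun n => hasFDerivAt_G (p n) (q n) z
  choose D hD hval using h
  have H : HasFDerivAt (fun w => ∑ n ∈ s, c n * G (p n) (q n) w)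
      (∑ n ∈ s, c n • D n) z := HasFDerivAt.fun_sum fun n _ => (hD n).const_mul (c n)
  rw [dz_eval H]
  have : ∀ n ∈ s, c n * dz (G (p n) (q n)) z
      = (1/2 : ℂ) * ((c n • D n) 1 - Complex.I * (c n • D n) Complex.I) := by
    intro n _
    rw [dz_eval (hD n)]
    simp [smul_eq_mul]; ring
  rw [Finset.sum_congr rfl this]
  simp [ContinuousLinearMap.sum_apply, Finset.mul_sum, Finset.sum_sub_distrib, mul_sub]

private lemma dzbar_cG (c : ℂ) (a b : ℕ) (z : ℂ) :
    dzbar (fun w => c * G a b w) z = c * dzbar (G a b) z := by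
  obtain ⟨D, hD, _⟩ := hasFDerivAt_G a b z
  rw [dzbar_eval (hD.const_mul c), dzbar_eval hD]
  simp [smul_eq_mul]; ring

private lemma dzbar_iter_gauss (j : ℕ) :
    dzbar^[j] (G 0 0) = fun z => (-1:ℂ)^j * G j 0 z := by
  induction j with
  | zero => simp
  | succ j ih =>
    rw [Function.iterate_succ_apply', ih]
    funext z
    rw [dzbar_cG, dzbar_G]
    simp [G]
    ring

private lemma comb_key (c z zb : ℂ) (i j : ℕ) :
    ∑ n ∈ range (i+1), c * (-1:ℂ)^n * (i.choose n : ℂ) * (j.descFactorial (i-n) : ℂ) *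
      (((j+n-i : ℕ) : ℂ) * z^(j+n-i-1) * zb^n - z^(j+n-i) * zb^(n+1))
    = ∑ n ∈ range (i+2), c * (-1:ℂ)^n * ((i+1).choose n : ℂ) * (j.descFactorial (i+1-n) : ℂ) *
        z^(j+n-(i+1)) * zb^n := by
  have hsplit : ∀ n ∈ range (i+1),
      c * (-1:ℂ)^n * (i.choose n : ℂ) * (j.descFactorial (i-n) : ℂ) *
        (((j+n-i : ℕ) : ℂ) * z^(j+n-i-1) * zb^n - z^(j+n-i) * zb^(n+1))
      = (c * (-1:ℂ)^n * (i.choose n : ℂ) * (j.descFactorial (i+1-n) : ℂ) * z^(j+n-(i+1)) * zb^n)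
        - (c * (-1:ℂ)^n * (i.choose n : ℂ) * (j.descFactorial (i-n) : ℂ) * z^(j+n-i) * zb^(n+1)) := by
    intro n hn
    have h1 : j.descFactorial (i+1-n) = (j+n-i) * j.descFactorial (i-n) := by
      have hn' : n ≤ i := by simpa [Nat.lt_succ_iff] using hn
      rw [show i+1-n = (i-n)+1 by omega, Nat.descFactorial_succ, show j-(i-n) = j+n-i by omega]
    rw [h1, show j+n-i-1 = j+n-(i+1) by omega]
    push_cast; ring
  rw [Finset.sum_congr rfl hsplit, Finset.sum_sub_distrib]
  rw [Finset.sum_range_succ'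
    (fun n => c * (-1:ℂ)^n * (i.choose n : ℂ) * (j.descFactorial (i+1-n) : ℂ) * z^(j+n-(i+1)) * zb^n) i]
  rw [Finset.sum_range_succ'
    (fun n => c * (-1:ℂ)^n * ((i+1).choose n : ℂ) * (j.descFactorial (i+1-n) : ℂ) * z^(j+n-(i+1)) * zb^n) (i+1)]
  have hext : (∑ k ∈ range i, c * (-1:ℂ)^(k+1) * (i.choose (k+1) : ℂ) *
        (j.descFactorial (i+1-(k+1)) : ℂ) * z^(j+(k+1)-(i+1)) * zb^(k+1))
      = ∑ k ∈ range (i+1), c * (-1:ℂ)^(k+1) * (i.choose (k+1) : ℂ) *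
        (j.descFactorial (i+1-(k+1)) : ℂ) * z^(j+(k+1)-(i+1)) * zb^(k+1) := by
    rw [Finset.sum_range_succ, Nat.choose_succ_self]
    simp
  have hterm : ∀ k ∈ range (i+1),
      (c * (-1:ℂ)^(k+1) * (i.choose (k+1) : ℂ) * (j.descFactorial (i+1-(k+1)) : ℂ) *
          z^(j+(k+1)-(i+1)) * zb^(k+1))
        - (c * (-1:ℂ)^k * (i.choose k : ℂ) * (j.descFactorial (i-k) : ℂ) * z^(j+k-i) * zb^(k+1))
      = c * (-1:ℂ)^(k+1) * (((i+1).choose (k+1) : ℕ) : ℂ) * (j.descFactorial (i+1-(k+1)) : ℂ) *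
          z^(j+(k+1)-(i+1)) * zb^(k+1) := by
    intro k hk
    rw [show i+1-(k+1) = i-k by omega, show j+(k+1)-(i+1) = j+k-i by omega, Nat.choose_succ_succ]
    push_cast; ring
  rw [hext, add_sub_right_comm, ← Finset.sum_sub_distrib, Finset.sum_congr rfl hterm]
  norm_num

private lemma dz_iter_G (c : ℂ) (j : ℕ) : ∀ i : ℕ,
    dz^[i] (fun w => c * G j 0 w) = fun z =>
      (∑ n ∈ Finset.range (i+1), c * (-1:ℂ)^n * (i.choose n : ℂ) * (j.descFactorial (i-n) : ℂ)
        * z^(j+n-i) * (starRingEnd ℂ z)^n) * Complex.exp (-(z * starRingEnd ℂ z)) := by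
  intro i
  induction i with
  | zero =>
    funext z
    simp [G]
    ring
  | succ i ih =>
    rw [Function.iterate_succ_apply', ih]
    funext z
    have hfun : (fun w => (∑ n ∈ Finset.range (i+1), c * (-1:ℂ)^n * (i.choose n : ℂ) *
          (j.descFactorial (i-n) : ℂ) * w^(j+n-i) * (starRingEnd ℂ w)^n) *
          Complex.exp (-(w * starRingEnd ℂ w)))
        = fun w => ∑ n ∈ Finset.range (i+1), (c * (-1:ℂ)^n * (i.choose n : ℂ) *
          (j.descFactorial (i-n) : ℂ)) * G (j+n-i) n w := by
      funext w
      rw [Finset.sum_mul]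
      refine Finset.sum_congr rfl fun n _ => ?_
      simp [G]; ring
    rw [hfun, dz_sum_cG (Finset.range (i+1)) _ (fun n => j+n-i) (fun n => n) z]
    have hderiv : ∀ n ∈ Finset.range (i+1),
        (c * (-1:ℂ)^n * (i.choose n : ℂ) * (j.descFactorial (i-n) : ℂ)) * dz (G (j+n-i) n) z
        = (c * (-1:ℂ)^n * (i.choose n : ℂ) * (j.descFactorial (i-n) : ℂ) *
            (((j+n-i : ℕ) : ℂ) * z^(j+n-i-1) * (starRingEnd ℂ z)^n
              - z^(j+n-i) * (starRingEnd ℂ z)^(n+1))) * Complex.exp (-(z * starRingEnd ℂ z)) := by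
      intro n _
      rw [dz_G]
      ring
    rw [Finset.sum_congr rfl hderiv, ← Finset.sum_mul, comb_key c z (starRingEnd ℂ z) i j]

theorem mixed_wirtinger_gauss (i j : ℕ) (z : ℂ) :
    dz^[i] (dzbar^[j] (fun w => Complex.exp (-(Complex.normSq w : ℂ)))) z
      = (∑ n ∈ Finset.range (i + 1),
          if j + n < i then 0 else
            (-1 : ℂ) ^ (n + j) * (i.choose n : ℂ) *
              ((j.factorial : ℂ) / ((j + n - i).factorial : ℂ)) *
              z ^ (j + n - i) * (starRingEnd ℂ z) ^ n) *
        Complex.exp (-(Complex.normSq z : ℂ)) := by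
  have hg : (fun w => Complex.exp (-(Complex.normSq w : ℂ))) = G 0 0 := by
    funext w; simp [G, Complex.mul_conj]
  rw [hg, dzbar_iter_gauss, dz_iter_G ((-1:ℂ)^j) j i, ← Complex.mul_conj]
  beta_reduce
  congr 1
  refine Finset.sum_congr rfl fun n hn => ?_
  have hn' : n ≤ i := by simpa [Nat.lt_succ_iff] using hn
  by_cases h : j + n < i
  · rw [if_pos h]
    have hz : j.descFactorial (i-n) = 0 := Nat.descFactorial_eq_zero_iff_lt.mpr (by omega)
    simp [hz]
  · rw [if_neg h]
    have hle : i - n ≤ j := by omega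
    have hfac : (j.descFactorial (i-n) : ℂ) = (j.factorial : ℂ) / ((j+n-i).factorial : ℂ) := by
      rw [eq_div_iff (by exact_mod_cast (Nat.factorial_pos _).ne')]
      have hh := Nat.factorial_mul_descFactorial hle
      rw [show j - (i-n) = j+n-i by omega] at hh
      exact_mod_cast (by rw [mul_comm]; exact hh : j.descFactorial (i-n) * (j+n-i).factorial = j.factorial)
    rw [hfac, pow_add]
    ring


end
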